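/- Let f : ℝⁿ → ℝ be convex and continuously differentiable, and let ξ, ζ : [0,T) → ℝⁿ be differentiable curves satisfying ξ'(t) = −∇f(ξ(t)) and ζ'(t) = −∇f(ζ(t)) for all t. Then for all t ∈ [0,T), |ζ(t) − ξ(t)| ≤ |ζ(0) − ξ(0)| (the contraction property of gradient flow in Euclidean space). -/

import Mathlib

open InnerProductSpace

local notation "⟪" x ", " y "⟫" => @inner ℝ _ _ x y

/-- First-order condition for a convex differentiable function. -/
lemma grad_first_order {n : ℕ} {f : EuclideanSpace ℝ (Fin n) → ℝ}
    (hconv : ConvexOn ℝ Set.univ f) (hC1 : ContDiff ℝ 1 f)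
    (x y : EuclideanSpace ℝ (Fin n)) :
    ⟪gradient f x, y - x⟫ ≤ f y - f x := by
  set c : ℝ → EuclideanSpace ℝ (Fin n) := fun s => x + s • (y - x) with hc
  have hcd : ∀ s : ℝ, HasDerivAt c (y - x) s := by
    intro s
    simpa [c] using ((hasDerivAt_id s).smul_const (y - x)).const_add x
  have hdf : ∀ z, HasGradientAt f (gradient f z) z := fun z =>
    ((hC1.differentiable one_ne_zero) z).hasGradientAt
  have hg : ∀ s : ℝ, HasDerivAt (fun s => f (c s)) ⟪gradient f (c s), y - x⟫ s := by
    intro s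
    have := (hdf (c s)).hasFDerivAt.comp_hasDerivAt s (hcd s)
    simpa [Function.comp_def] using this
  have hgconv : ConvexOn ℝ Set.univ (fun s => f (c s)) := by
    have h := hconv.comp_affineMap (AffineMap.lineMap x y : ℝ →ᵃ[ℝ] _)
    rw [Set.preimage_univ] at h
    have he : (fun s => f (c s)) = f ∘ (AffineMap.lineMap x y : ℝ →ᵃ[ℝ] _) := by
      funext s
      simp [c, AffineMap.lineMap_apply, add_comm]
    rwa [he]
  have := hgconv.le_slope_of_hasDerivAt (Set.mem_univ (0:ℝ)) (Set.mem_univ (1:ℝ))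
    one_pos (hg 0)
  simp only [slope_def_field] at this
  have h0 : c 0 = x := by simp [c]
  have h1 : c 1 = y := by simp [c]
  rw [h0, h1] at this
  simpa [h0] using this.trans_eq (by ring)

/-- Monotonicity of the gradient of a convex function. -/
lemma grad_mono {n : ℕ} {f : EuclideanSpace ℝ (Fin n) → ℝ}
    (hconv : ConvexOn ℝ Set.univ f) (hC1 : ContDiff ℝ 1 f)
    (x y : EuclideanSpace ℝ (Fin n)) :
    0 ≤ ⟪gradient f y - gradient f x, y - x⟫ := by
  have h1 := grad_first_order hconv hC1 x y
  have h2 := grad_first_order hconv hC1 y x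
  have : ⟪gradient f x, y - x⟫ + ⟪gradient f y, x - y⟫ ≤ 0 := by linarith
  have e : ⟪gradient f y - gradient f x, y - x⟫
      = -(⟪gradient f x, y - x⟫ + ⟪gradient f y, x - y⟫) := by
    rw [inner_sub_left]
    have : (x - y : EuclideanSpace ℝ (Fin n)) = -(y - x) := by abel
    rw [this, inner_neg_right]
    ring
  rw [e]
  linarith

/-- contraction property of gradient flow of a convex `C¹` function
in Euclidean space. -/
theorem gradient_flow_contraction (n : ℕ) (T : ℝ)
    (f : EuclideanSpace ℝ (Fin n) → ℝ)
    (hconv : ConvexOn ℝ Set.univ f)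
    (hC1 : ContDiff ℝ 1 f)
    (ξ ζ : ℝ → EuclideanSpace ℝ (Fin n))
    (hξ : ∀ t ∈ Set.Ico (0:ℝ) T, HasDerivAt ξ (-(gradient f (ξ t))) t)
    (hζ : ∀ t ∈ Set.Ico (0:ℝ) T, HasDerivAt ζ (-(gradient f (ζ t))) t) :
    ∀ t ∈ Set.Ico (0:ℝ) T, ‖ζ t - ξ t‖ ≤ ‖ζ 0 - ξ 0‖ := by
  intro t ht
  set u : ℝ → EuclideanSpace ℝ (Fin n) := fun s => ζ s - ξ s with hu
  set g : ℝ → ℝ := fun s => ⟪u s, u s⟫ with hgdef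
  have hd : ∀ s ∈ Set.Ico (0:ℝ) T,
      HasDerivAt u (-(gradient f (ζ s)) - -(gradient f (ξ s))) s :=
    fun s hs => (hζ s hs).sub (hξ s hs)
  have hg : ∀ s ∈ Set.Ico (0:ℝ) T, HasDerivAt g
      (⟪u s, -(gradient f (ζ s)) - -(gradient f (ξ s))⟫
        + ⟪-(gradient f (ζ s)) - -(gradient f (ξ s)), u s⟫) s := by
    intro s hs
    exact HasDerivAt.inner ℝ (hd s hs) (hd s hs)
  have hanti : AntitoneOn g (Set.Ico 0 T) := by
    apply antitoneOn_of_deriv_nonpos (convex_Ico 0 T)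
    · exact fun s hs => (hg s hs).continuousAt.continuousWithinAt
    · intro s hs
      rw [interior_Ico] at hs
      exact ((hg s (Set.Ioo_subset_Ico_self hs)).differentiableAt).differentiableWithinAt
    · intro s hs
      rw [interior_Ico] at hs
      have hs' : s ∈ Set.Ico (0:ℝ) T := Set.Ioo_subset_Ico_self hs
      rw [(hg s hs').deriv]
      have hm := grad_mono hconv hC1 (ξ s) (ζ s)
      have e1 : (-(gradient f (ζ s)) - -(gradient f (ξ s)))
          = -(gradient f (ζ s) - gradient f (ξ s)) := by abel
      rw [e1, inner_neg_right, inner_neg_left, real_inner_comm]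
      simp only [u]
      linarith
  have h0 : (0:ℝ) ∈ Set.Ico (0:ℝ) T := ⟨le_refl 0, lt_of_le_of_lt ht.1 ht.2⟩
  have hle : g t ≤ g 0 := hanti h0 ht ht.1
  have hgt : g t = ‖u t‖ ^ 2 := real_inner_self_eq_norm_sq (u t)
  have hg0 : g 0 = ‖u 0‖ ^ 2 := real_inner_self_eq_norm_sq (u 0)
  rw [hgt, hg0] at hle
  have := Real.sqrt_le_sqrt hle
  rwa [Real.sqrt_sq (norm_nonneg _), Real.sqrt_sq (norm_nonneg _)] at this
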